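/- Let F : {-1,1}^M → {-1,1} be a Boolean function, let α ∈ [0,1], let z ∈ {-1,1}^M, and let p_1,…,p_M ∈ [0,α]. Let y ∈ {-1,1}^M be a random string whose i-th bit is independently −1 with probability p_i and +1 with probability 1 − p_i. Then the probability that F(z_1,…,z_M) ≠ F(z_1·y_1,…,z_M·y_M) is at most 2·α·bs_z(F). Equivalently, Σ_{y ∈ {-1,1}^M} (∏_{i : y_i = −1} p_i)·(∏_{i : y_i = 1} (1 − p_i))·[F(z) ≠ F(z·y)] ≤ 2·α·bs_z(F), where z·y denotes the coordinatewise product. -/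

import Mathlib

/-- The Boolean hypercube `{-1,1}^M` as a finite set of points in `ℝ^M`. -/
noncomputable def cube (M : ℕ) : Finset (Fin M → ℝ) :=
  Fintype.piFinset fun _ => ({1, -1} : Finset ℝ)

/-- `flipSet z S` negates the coordinates of `z` indexed by `S`. -/
def flipSet {M : ℕ} (z : Fin M → ℝ) (S : Finset (Fin M)) : Fin M → ℝ :=
  fun i => if i ∈ S then -z i else z i

/-- Block sensitivity of `F` at the point `z`: the maximum number of pairwise disjoint
blocks whose flipping changes the value of `F`. -/
noncomputable def bsAt {M : ℕ} (F : (Fin M → ℝ) → ℝ) (z : Fin M → ℝ) : ℕ :=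
  sSup {r : ℕ | ∃ S : Fin r → Finset (Fin M),
    (∀ i j, i ≠ j → Disjoint (S i) (S j)) ∧ ∀ i, F (flipSet z (S i)) ≠ F z}

lemma family_le_bsAt {M : ℕ} (F : (Fin M → ℝ) → ℝ) (z : Fin M → ℝ) {r : ℕ}
    (S : Fin r → Finset (Fin M)) (hd : ∀ i j, i ≠ j → Disjoint (S i) (S j))
    (hs : ∀ i, F (flipSet z (S i)) ≠ F z) : r ≤ bsAt F z := by
  classical
  refine le_csSup ⟨M, ?_⟩ ⟨S, hd, hs⟩
  rintro r ⟨S, hd, hs⟩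
  have hne : ∀ i, (S i).Nonempty := by
    intro i
    rcases (S i).eq_empty_or_nonempty with h | h
    · exfalso; apply hs i; congr 1; funext x; simp [flipSet, h]
    · exact h
  calc r = ∑ _i : Fin r, 1 := by simp
    _ ≤ ∑ i : Fin r, (S i).card := Finset.sum_le_sum fun i _ => (hne i).card_pos
    _ = (Finset.univ.biUnion S).card :=
        (Finset.card_biUnion (fun x _ y _ hxy => hd x y hxy)).symm
    _ ≤ (Finset.univ : Finset (Fin M)).card := Finset.card_le_card (Finset.subset_univ _)
    _ = M := by simp

open Classical in
theorem stmt4 {M : ℕ} (F : (Fin M → ℝ) → ℝ)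
    (hF : ∀ z ∈ cube M, F z = 1 ∨ F z = -1)
    (α : ℝ) (hα : α ∈ Set.Icc (0 : ℝ) 1)
    (z : Fin M → ℝ) (hz : z ∈ cube M)
    (p : Fin M → ℝ) (hp : ∀ i, p i ∈ Set.Icc (0 : ℝ) α) :
    (∑ y ∈ cube M,
      (∏ i ∈ Finset.univ.filter (fun i => y i = -1), p i) *
      (∏ i ∈ Finset.univ.filter (fun i => y i = 1), (1 - p i)) *
      (if F z ≠ F (fun i => z i * y i) then (1 : ℝ) else 0))
      ≤ 2 * α * (bsAt F z : ℝ) := by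
  obtain ⟨hα0, hα1⟩ := hα
  have hcase : ∀ y ∈ cube M, ∀ i, y i = 1 ∨ y i = -1 := by
    intro y hy i
    have := Fintype.mem_piFinset.mp hy i
    simpa using this
  rcases eq_or_lt_of_le hα0 with h0 | hpos
  · -- α = 0 : every term vanishes
    have hp0 : ∀ i, p i = 0 := fun i => le_antisymm (by simpa [← h0] using (hp i).2) (hp i).1
    have : (∑ y ∈ cube M,
      (∏ i ∈ Finset.univ.filter (fun i => y i = -1), p i) *
      (∏ i ∈ Finset.univ.filter (fun i => y i = 1), (1 - p i)) *
      (if F z ≠ F (fun i => z i * y i) then (1 : ℝ) else 0)) = 0 := by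
      refine Finset.sum_eq_zero ?_
      intro y hy
      by_cases hne : F z ≠ F (fun i => z i * y i)
      · have hex : ∃ i, y i = -1 := by
          by_contra hall
          push_neg at hall
          apply hne
          congr 1
          funext i
          rcases hcase y hy i with h | h
          · rw [h, mul_one]
          · exact absurd h (hall i)
        obtain ⟨i0, hi0⟩ := hex
        have : (∏ i ∈ Finset.univ.filter (fun i => y i = -1), p i) = 0 :=
          Finset.prod_eq_zero (Finset.mem_filter.mpr ⟨Finset.mem_univ _, hi0⟩) (hp0 i0)
        rw [this, zero_mul, zero_mul]
      · rw [if_neg hne, mul_zero]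
    rw [this, ← h0]
    simp
  -- now 0 < α
  set b : ℕ := bsAt F z with hbdef
  set k : ℕ := ⌊α⁻¹⌋₊ with hkdef
  have hinv1 : (1:ℝ) ≤ α⁻¹ := one_le_inv_iff₀.mpr ⟨hpos, hα1⟩
  have hk1 : 1 ≤ k := Nat.le_floor (by exact_mod_cast hinv1)
  have hkinv : (k:ℝ) ≤ α⁻¹ := Nat.floor_le (by positivity)
  have hkp : ∀ i, (k:ℝ) * p i ≤ 1 := by
    intro i
    calc (k:ℝ) * p i ≤ α⁻¹ * α := mul_le_mul hkinv (hp i).2 (hp i).1 (by positivity)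
      _ = 1 := inv_mul_cancel₀ hpos.ne'
  set w : Fin M → Fin (k+1) → ℝ := fun i x => if x = 0 then 1 - k * p i else p i with hwdef
  set W : (Fin M → Fin (k+1)) → ℝ := fun L => ∏ i, w i (L i) with hWdef
  have hwnn : ∀ i x, 0 ≤ w i x := by
    intro i x
    by_cases h : x = 0
    · simp only [hwdef, h, if_pos]
      linarith [hkp i]
    · simp only [hwdef, if_neg h]
      exact (hp i).1
  have hW0 : ∀ L, 0 ≤ W L := fun L => Finset.prod_nonneg fun i _ => hwnn i (L i)
  have hwsum : ∀ i, (∑ x : Fin (k+1), w i x) = 1 := by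
    intro i
    rw [Fin.sum_univ_succ]
    have h1 : ∀ x : Fin k, w i x.succ = p i := fun x => by
      simp [hwdef, Fin.succ_ne_zero x]
    rw [Finset.sum_congr rfl fun x _ => h1 x, Finset.sum_const, Finset.card_univ,
      Fintype.card_fin, nsmul_eq_mul]
    simp [hwdef]
  have hWsum : (∑ L : Fin M → Fin (k+1), W L) = 1 := by
    rw [hWdef, ← Fintype.piFinset_univ, ← Finset.prod_univ_sum]
    rw [Finset.prod_congr rfl fun i _ => hwsum i, Finset.prod_const_one]
  set yOf : Fin k → (Fin M → Fin (k+1)) → Fin M → ℝ :=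
    fun j L i => if L i = j.succ then -1 else 1 with hyOfdef
  -- Step A
  have hA : ∀ j : Fin k,
      (∑ y ∈ cube M,
        (∏ i ∈ Finset.univ.filter (fun i => y i = -1), p i) *
        (∏ i ∈ Finset.univ.filter (fun i => y i = 1), (1 - p i)) *
        (if F z ≠ F (fun i => z i * y i) then (1 : ℝ) else 0))
      = ∑ L : Fin M → Fin (k+1), W L *
          (if F z ≠ F (fun i => z i * yOf j L i) then (1 : ℝ) else 0) := by
    intro j
    have hmaps : ∀ L : Fin M → Fin (k+1), L ∈ (Finset.univ : Finset _) → yOf j L ∈ cube M := by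
      intro L _
      rw [cube, Fintype.mem_piFinset]
      intro i
      by_cases h : L i = j.succ <;> simp [hyOfdef, h]
    rw [← Finset.sum_fiberwise_of_maps_to hmaps
      (fun L => W L * (if F z ≠ F (fun i => z i * yOf j L i) then (1:ℝ) else 0))]
    refine Finset.sum_congr rfl fun y hy => ?_
    have hy2 := hcase y hy
    have hinner : (∑ L ∈ Finset.univ.filter (fun L => yOf j L = y), W L *
        (if F z ≠ F (fun i => z i * yOf j L i) then (1:ℝ) else 0))
        = (∑ L ∈ Finset.univ.filter (fun L => yOf j L = y), W L) *
          (if F z ≠ F (fun i => z i * y i) then (1:ℝ) else 0) := by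
      rw [Finset.sum_mul]
      refine Finset.sum_congr rfl fun L hL => ?_
      have heq := (Finset.mem_filter.mp hL).2
      rw [show (fun i => z i * yOf j L i) = fun i => z i * y i from by rw [heq]]
    have hfiber : Finset.univ.filter (fun L : Fin M → Fin (k+1) => yOf j L = y)
        = Fintype.piFinset (fun i => if y i = -1 then ({j.succ} : Finset (Fin (k+1)))
            else Finset.univ.erase j.succ) := by
      ext L
      simp only [Finset.mem_filter, Finset.mem_univ, true_and, Fintype.mem_piFinset, funext_iff]
      refine forall_congr' fun i => ?_
      rcases hy2 i with h | h <;> rw [h] <;> by_cases hL : L i = j.succ <;>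
        norm_num [hyOfdef, hL, Finset.mem_erase, Finset.mem_singleton]
    have hsumW : (∑ L ∈ Fintype.piFinset (fun i => if y i = -1 then
            ({j.succ} : Finset (Fin (k+1))) else Finset.univ.erase j.succ), W L)
        = ∏ i, (if y i = -1 then p i else 1 - p i) := by
      rw [hWdef, ← Finset.prod_univ_sum]
      refine Finset.prod_congr rfl fun i _ => ?_
      by_cases h : y i = -1
      · rw [if_pos h, if_pos h, Finset.sum_singleton]
        simp [hwdef, Fin.succ_ne_zero]
      · rw [if_neg h, if_neg h, Finset.sum_erase_eq_sub (Finset.mem_univ _), hwsum i]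
        simp [hwdef, Fin.succ_ne_zero]
    have hweight : (∏ i ∈ Finset.univ.filter (fun i => y i = -1), p i) *
        (∏ i ∈ Finset.univ.filter (fun i => y i = 1), (1 - p i))
        = ∏ i, (if y i = -1 then p i else 1 - p i) := by
      rw [Finset.prod_filter, Finset.prod_filter, ← Finset.prod_mul_distrib]
      refine Finset.prod_congr rfl fun i _ => ?_
      rcases hy2 i with h | h <;> rw [h] <;> norm_num
    rw [hinner, hfiber, hsumW, hweight]
  -- Step B
  have hB : ∀ L : Fin M → Fin (k+1),
      (∑ j : Fin k, (if F z ≠ F (fun i => z i * yOf j L i) then (1 : ℝ) else 0)) ≤ (b : ℝ) := by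
    intro L
    rw [Finset.sum_boole]
    set T := Finset.univ.filter (fun j : Fin k => F z ≠ F (fun i => z i * yOf j L i)) with hT
    have hcard : T.card ≤ b := by
      set e := T.orderIsoOfFin rfl with he
      refine family_le_bsAt F z
        (fun m : Fin T.card => Finset.univ.filter (fun i => L i = ((e m : Fin k)).succ)) ?_ ?_
      · intro m m' hne
        rw [Finset.disjoint_left]
        intro i hi hi'
        apply hne
        have h1 := (Finset.mem_filter.mp hi).2
        have h2 := (Finset.mem_filter.mp hi').2
        have h4 : (e m : Fin k) = (e m' : Fin k) := Fin.succ_injective _ (h1.symm.trans h2)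
        exact e.injective (Subtype.ext h4)
      · intro m
        have hmem : (e m : Fin k) ∈ T := (e m).2
        have hmem2 := (Finset.mem_filter.mp hmem).2
        have key : flipSet z (Finset.univ.filter (fun i => L i = ((e m : Fin k)).succ))
            = fun i => z i * yOf (e m : Fin k) L i := by
          funext i
          by_cases h : L i = ((e m : Fin k)).succ <;>
            simp [flipSet, hyOfdef, h]
        rw [key]
        exact fun hcon => hmem2 hcon.symm
    exact_mod_cast hcard
  -- assembly
  have hkR : (0:ℝ) < (k:ℝ) := by exact_mod_cast hk1
  have hmain : (k:ℝ) * (∑ y ∈ cube M,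
      (∏ i ∈ Finset.univ.filter (fun i => y i = -1), p i) *
      (∏ i ∈ Finset.univ.filter (fun i => y i = 1), (1 - p i)) *
      (if F z ≠ F (fun i => z i * y i) then (1 : ℝ) else 0)) ≤ (b : ℝ) := by
    calc (k:ℝ) * _ = ∑ _j : Fin k, (∑ y ∈ cube M,
          (∏ i ∈ Finset.univ.filter (fun i => y i = -1), p i) *
          (∏ i ∈ Finset.univ.filter (fun i => y i = 1), (1 - p i)) *
          (if F z ≠ F (fun i => z i * y i) then (1 : ℝ) else 0)) := by
            rw [Finset.sum_const, Finset.card_univ, Fintype.card_fin, nsmul_eq_mul]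
      _ = ∑ j : Fin k, ∑ L : Fin M → Fin (k+1), W L *
            (if F z ≠ F (fun i => z i * yOf j L i) then (1 : ℝ) else 0) :=
          Finset.sum_congr rfl fun j _ => hA j
      _ = ∑ L : Fin M → Fin (k+1), ∑ j : Fin k, W L *
            (if F z ≠ F (fun i => z i * yOf j L i) then (1 : ℝ) else 0) := Finset.sum_comm
      _ = ∑ L : Fin M → Fin (k+1), W L * ∑ j : Fin k,
            (if F z ≠ F (fun i => z i * yOf j L i) then (1 : ℝ) else 0) := by
          exact Finset.sum_congr rfl fun L _ => (Finset.mul_sum _ _ _).symm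
      _ ≤ ∑ L : Fin M → Fin (k+1), W L * (b:ℝ) :=
          Finset.sum_le_sum fun L _ => mul_le_mul_of_nonneg_left (hB L) (hW0 L)
      _ = (∑ L : Fin M → Fin (k+1), W L) * (b:ℝ) := (Finset.sum_mul _ _ _).symm
      _ = (b:ℝ) := by rw [hWsum, one_mul]
  have h2αk : (1:ℝ) ≤ 2 * α * k := by
    rcases le_or_gt α⁻¹ 2 with h | h
    · have h1 : (1:ℝ) ≤ 2 * α := by
        have := mul_le_mul_of_nonneg_right h hα0
        rwa [inv_mul_cancel₀ hpos.ne'] at this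
      have hk1' : (1:ℝ) ≤ (k:ℝ) := by exact_mod_cast hk1
      nlinarith
    · have h1 : α⁻¹ - 1 < (k:ℝ) := Nat.sub_one_lt_floor α⁻¹
      have h2 : α * α⁻¹ = 1 := mul_inv_cancel₀ hpos.ne'
      nlinarith [mul_lt_mul_of_pos_left h1 (by linarith : (0:ℝ) < 2 * α)]
  have hb0 : (0:ℝ) ≤ (b:ℝ) := Nat.cast_nonneg b
  have : (∑ y ∈ cube M,
      (∏ i ∈ Finset.univ.filter (fun i => y i = -1), p i) *
      (∏ i ∈ Finset.univ.filter (fun i => y i = 1), (1 - p i)) *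
      (if F z ≠ F (fun i => z i * y i) then (1 : ℝ) else 0)) ≤ (b:ℝ) / (k:ℝ) := by
    rw [le_div_iff₀ hkR]
    linarith [hmain]
  refine this.trans ?_
  rw [div_le_iff₀ hkR]
  nlinarith
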